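/- Let d ≥ 1, let V ⊆ ℝ^d be a linear subspace such that V + ℤ^d is dense in ℝ^d, and let ∼ be an equivalence relation on ℝ^d whose graph {(x,y) : x ∼ y} is closed in ℝ^d × ℝ^d, which is ℤ^d-equivariant (x ∼ y implies x + k ∼ y + k for every k ∈ ℤ^d), and which is saturated by V (x ∼ x + v for every x ∈ ℝ^d and every v ∈ V). If in addition the equivalence class S = {y : y ∼ 0} of the origin is connected, then S is a (closed) ℝ-linear subspace of ℝ^d, every equivalence class equals x + S, and S + ℤ^d is dense in ℝ^d. -/

import Mathlib

open Filter Topology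

/-- A closed connected additive subgroup of `ℝ^d` is closed under scalar
multiplication. -/
lemma aux_smul_mem (d : ℕ) (G : AddSubgroup (Fin d → ℝ))
    (hGcl : IsClosed (G : Set (Fin d → ℝ)))
    (hGconn : IsConnected (G : Set (Fin d → ℝ))) :
    ∀ g ∈ G, ∀ t : ℝ, t • g ∈ G := by
  classical
  -- the largest linear subspace contained in `G`
  set W : Submodule ℝ (Fin d → ℝ) :=
    { carrier := {x | ∀ t : ℝ, t • x ∈ G}
      add_mem' := fun hx hy t => by simpa [smul_add] using G.add_mem (hx t) (hy t)
      zero_mem' := fun t => by simpa using G.zero_mem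
      smul_mem' := fun c x hx t => by simpa [smul_smul] using hx (t * c) } with hWdef
  have hWG : ∀ w ∈ W, w ∈ G := fun w hw => by simpa using hw 1
  suffices hGW : ∀ g ∈ G, g ∈ W by
    intro g hg t; exact hGW g hg t
  obtain ⟨C, hC⟩ := Submodule.exists_isCompl W
  have hCcl : IsClosed (C : Set (Fin d → ℝ)) := Submodule.closed_of_finiteDimensional C
  -- projection onto `C` along `W`
  set π : (Fin d → ℝ) →ₗ[ℝ] (Fin d → ℝ) :=
    C.subtype.comp (C.projectionOnto W hC.symm) with hπdef
  have hπcont : Continuous π := π.continuous_of_finiteDimensional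
  have hπW : ∀ w ∈ W, π w = 0 := by
    intro w hw
    simp [hπdef, Submodule.projectionOnto_apply_of_mem_right hC.symm hw]
  have hπC : ∀ c ∈ C, π c = c := by
    intro c hc
    simp [hπdef, Submodule.projectionOnto_apply_of_mem_left hC.symm hc]
  -- decomposition
  have hdecomp : ∀ g : Fin d → ℝ, ∃ w ∈ W, ∃ c ∈ C, g = w + c := by
    intro g
    have : g ∈ W ⊔ C := by rw [hC.sup_eq_top]; trivial
    obtain ⟨w, hw, c, hc, hwc⟩ := Submodule.mem_sup.1 this
    exact ⟨w, hw, c, hc, hwc.symm⟩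
  -- D = G ∩ C
  set D : AddSubgroup (Fin d → ℝ) := G ⊓ C.toAddSubgroup with hDdef
  have hDG : ∀ x ∈ D, x ∈ G := fun x hx => hx.1
  have hDC : ∀ x ∈ D, x ∈ C := fun x hx => hx.2
  have hDcl : IsClosed (D : Set (Fin d → ℝ)) := hGcl.inter hCcl
  have hπimage : π '' (G : Set (Fin d → ℝ)) = (D : Set (Fin d → ℝ)) := by
    apply Set.Subset.antisymm
    · rintro _ ⟨g, hg, rfl⟩
      obtain ⟨w, hw, c, hc, rfl⟩ := hdecomp g
      have hπg : π (w + c) = c := by rw [map_add, hπW w hw, hπC c hc, zero_add]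
      rw [hπg]
      refine ⟨?_, hc⟩
      have : c = (w + c) - w := by ring
      rw [this]
      exact G.sub_mem hg (hWG w hw)
    · intro x hx
      exact ⟨x, hDG x hx, hπC x (hDC x hx)⟩
  have hDconn : IsConnected (D : Set (Fin d → ℝ)) := by
    rw [← hπimage]
    exact hGconn.image π hπcont.continuousOn
  -- D is discrete near 0
  have hsmall : ∃ ε > (0 : ℝ), ∀ x ∈ D, ‖x‖ < ε → x = 0 := by
    by_contra hcon
    push_neg at hcon
    have hseq : ∀ n : ℕ, ∃ x, x ∈ D ∧ ‖x‖ < 1 / (n + 1) ∧ x ≠ 0 := by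
      intro n
      obtain ⟨x, hxD, hxn, hxne⟩ := hcon (1 / (n + 1)) (by positivity)
      exact ⟨x, hxD, hxn, hxne⟩
    choose g hgD hglt hgne using hseq
    have hgnorm : ∀ n, (0 : ℝ) < ‖g n‖ := fun n => norm_pos_iff.2 (hgne n)
    set u : ℕ → (Fin d → ℝ) := fun n => ‖g n‖⁻¹ • g n with hudef
    have huS : ∀ n, u n ∈ Metric.sphere (0 : Fin d → ℝ) 1 := by
      intro n
      rw [mem_sphere_zero_iff_norm, hudef, norm_smul, norm_inv, norm_norm,
        inv_mul_cancel₀ (hgnorm n).ne']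
    obtain ⟨x, hxS, φ, hφ, hconv⟩ := (isCompact_sphere (0 : Fin d → ℝ) 1).tendsto_subseq huS
    have hnorm0 : Tendsto (fun n => ‖g (φ n)‖) atTop (𝓝 0) := by
      apply squeeze_zero (fun n => (hgnorm _).le) (fun n => ?_)
        tendsto_one_div_add_atTop_nhds_zero_nat
      have h1 : ‖g (φ n)‖ < 1 / (φ n + 1) := hglt (φ n)
      have h2 : (1 : ℝ) / (φ n + 1) ≤ 1 / (n + 1) := by
        apply one_div_le_one_div_of_le (by positivity)
        have hn : (n : ℝ) ≤ (φ n : ℝ) := Nat.cast_le.2 hφ.le_apply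
        linarith
      linarith
    have hline : ∀ t : ℝ, t • x ∈ D := by
      intro t
      set s : ℕ → ℝ := fun n => (⌊t / ‖g (φ n)‖⌋ : ℝ) * ‖g (φ n)‖ with hsdef
      have hmem : ∀ n, s n • u (φ n) ∈ D := by
        intro n
        have h1 : (⌊t / ‖g (φ n)‖⌋ : ℤ) • g (φ n) ∈ D := D.zsmul_mem (hgD (φ n)) _
        have h2 : s n • u (φ n) = (⌊t / ‖g (φ n)‖⌋ : ℤ) • g (φ n) := by
          rw [← Int.cast_smul_eq_zsmul ℝ, hsdef, hudef, smul_smul, mul_assoc,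
            mul_inv_cancel₀ (hgnorm (φ n)).ne', mul_one]
        rwa [h2]
      have hs : Tendsto s atTop (𝓝 t) := by
        have hlow : Tendsto (fun n => t - ‖g (φ n)‖) atTop (𝓝 t) := by
          have := (tendsto_const_nhds (x := t) (f := atTop (α := ℕ))).sub hnorm0
          simpa using this
        refine tendsto_of_tendsto_of_tendsto_of_le_of_le hlow
          (tendsto_const_nhds (x := t)) ?_ ?_
        · intro n
          have h2 := hgnorm (φ n)
          have h1 : t / ‖g (φ n)‖ - 1 ≤ (⌊t / ‖g (φ n)‖⌋ : ℝ) := (Int.sub_one_lt_floor _).le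
          have h4 : (t / ‖g (φ n)‖ - 1) * ‖g (φ n)‖ ≤ (⌊t / ‖g (φ n)‖⌋ : ℝ) * ‖g (φ n)‖ :=
            mul_le_mul_of_nonneg_right h1 h2.le
          have h5 : (t / ‖g (φ n)‖) * ‖g (φ n)‖ = t := div_mul_cancel₀ t h2.ne'
          rw [sub_mul, h5, one_mul] at h4
          show t - ‖g (φ n)‖ ≤ s n
          rw [hsdef]
          exact h4
        · intro n
          have h2 := hgnorm (φ n)
          have h3 : (⌊t / ‖g (φ n)‖⌋ : ℝ) ≤ t / ‖g (φ n)‖ := Int.floor_le _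
          show s n ≤ t
          rw [hsdef]
          calc (⌊t / ‖g (φ n)‖⌋ : ℝ) * ‖g (φ n)‖ ≤ (t / ‖g (φ n)‖) * ‖g (φ n)‖ :=
                mul_le_mul_of_nonneg_right h3 h2.le
            _ = t := div_mul_cancel₀ t h2.ne'
      have htend : Tendsto (fun n => s n • u (φ n)) atTop (𝓝 (t • x)) :=
        hs.smul hconv
      exact hDcl.mem_of_tendsto htend (Eventually.of_forall hmem)
    have hxW : x ∈ W := fun t => hDG _ (hline t)
    have hxC : x ∈ C := hDC _ (by simpa using hline 1)
    have : x = 0 := by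
      have := hC.inf_eq_bot
      have hx : x ∈ W ⊓ C := ⟨hxW, hxC⟩
      rw [this] at hx
      simpa using hx
    rw [mem_sphere_zero_iff_norm] at hxS
    rw [this] at hxS
    simp at hxS
  -- connectedness forces D = {0}
  obtain ⟨ε, hε, hεD⟩ := hsmall
  have hD0 : ∀ x ∈ D, x = (0 : Fin d → ℝ) := by
    have hpre := hDconn.isPreconnected
    by_contra hcon
    push_neg at hcon
    obtain ⟨y, hyD, hyne⟩ := hcon
    have hcover : (D : Set (Fin d → ℝ)) ⊆ Metric.ball 0 ε ∪ {z | ε / 2 < ‖z‖} := by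
      intro z hz
      by_cases h : ‖z‖ < ε
      · left; simpa [Metric.mem_ball, dist_zero_right] using h
      · right; simp only [Set.mem_setOf_eq]; linarith [not_lt.1 h]
    have h1 : ((D : Set (Fin d → ℝ)) ∩ Metric.ball 0 ε).Nonempty :=
      ⟨0, D.zero_mem, by simpa [Metric.mem_ball] using hε⟩
    have h2 : ((D : Set (Fin d → ℝ)) ∩ {z | ε / 2 < ‖z‖}).Nonempty := by
      refine ⟨y, hyD, ?_⟩
      simp only [Set.mem_setOf_eq]
      by_contra hy
      push_neg at hy
      exact hyne (hεD y hyD (by linarith))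
    have h3 := hpre (Metric.ball 0 ε) {z | ε / 2 < ‖z‖} Metric.isOpen_ball
      (isOpen_lt continuous_const continuous_norm) hcover h1 h2
    obtain ⟨z, hzD, hz1, hz2⟩ := h3
    have hz0 : z = 0 := hεD z hzD (by simpa [Metric.mem_ball, dist_zero_right] using hz1)
    rw [hz0] at hz2
    simp only [Set.mem_setOf_eq, norm_zero] at hz2
    linarith
  -- conclude G ⊆ W
  intro g hg
  obtain ⟨w, hw, c, hc, rfl⟩ := hdecomp g
  have hcD : c ∈ D := by
    refine ⟨?_, hc⟩
    have : c = (w + c) - w := by ring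
    rw [this]
    exact G.sub_mem hg (hWG w hw)
  have := hD0 c hcD
  subst this
  simpa using hw

/-- A closed, `ℤ^d`-equivariant, `V`-saturated equivalence relation on `ℝ^d`
(with `V + ℤ^d` dense) whose class of the origin is connected has all of its
classes equal to translates of a single closed linear subspace `S`, and
`S + ℤ^d` is dense in `ℝ^d`. -/
theorem stmt_1 (d : ℕ) (hd : 1 ≤ d) (V : Submodule ℝ (Fin d → ℝ))
    (hV : Dense {x : Fin d → ℝ | ∃ v ∈ V, ∃ k : Fin d → ℤ, x = v + (fun i => (k i : ℝ))})
    (r : (Fin d → ℝ) → (Fin d → ℝ) → Prop) (hr : Equivalence r)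
    (hclosed : IsClosed {p : (Fin d → ℝ) × (Fin d → ℝ) | r p.1 p.2})
    (hequiv : ∀ x y : Fin d → ℝ, r x y → ∀ k : Fin d → ℤ,
      r (x + (fun i => (k i : ℝ))) (y + (fun i => (k i : ℝ))))
    (hsat : ∀ x : Fin d → ℝ, ∀ v ∈ V, r x (x + v))
    (hconn : IsConnected {y : Fin d → ℝ | r y 0}) :
    ∃ S : Submodule ℝ (Fin d → ℝ),
      IsClosed (S : Set (Fin d → ℝ)) ∧
      (∀ y : Fin d → ℝ, r y 0 ↔ y ∈ S) ∧
      (∀ x y : Fin d → ℝ, r x y ↔ y - x ∈ S) ∧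
      Dense {x : Fin d → ℝ | ∃ s ∈ S, ∃ k : Fin d → ℤ, x = s + (fun i => (k i : ℝ))} := by
  classical
  -- Full translation invariance, from the dense set `V + ℤ^d` and closedness.
  have hTinv : ∀ x y : Fin d → ℝ, r x y → ∀ t : Fin d → ℝ, r (x + t) (y + t) := by
    intro x y hxy t
    have hTc : IsClosed {t : Fin d → ℝ | r (x + t) (y + t)} := by
      have hcont : Continuous fun t : Fin d → ℝ => ((x + t, y + t) : _ × _) := by
        fun_prop
      exact hclosed.preimage hcont
    have hsub : {x : Fin d → ℝ | ∃ v ∈ V, ∃ k : Fin d → ℤ, x = v + (fun i => (k i : ℝ))} ⊆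
        {t | r (x + t) (y + t)} := by
      rintro _ ⟨v, hv, k, rfl⟩
      have h1 := hequiv x y hxy k
      have h2 := hsat (x + fun i => (k i : ℝ)) v hv
      have h3 := hsat (y + fun i => (k i : ℝ)) v hv
      have e1 : x + (v + fun i => (k i : ℝ)) = (x + fun i => (k i : ℝ)) + v := by abel
      have e2 : y + (v + fun i => (k i : ℝ)) = (y + fun i => (k i : ℝ)) + v := by abel
      show r (x + (v + fun i => (k i : ℝ))) (y + (v + fun i => (k i : ℝ)))
      rw [e1, e2]
      exact hr.trans (hr.trans (hr.symm h2) h1) h3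
    exact closure_minimal hsub hTc (hV t)
  have hr0 : ∀ x y : Fin d → ℝ, r x y ↔ r (y - x) 0 := by
    intro x y
    constructor
    · intro h
      have := hTinv x y h (-x)
      rw [add_neg_cancel, ← sub_eq_add_neg] at this
      exact hr.symm this
    · intro h
      have := hTinv (y - x) 0 h x
      rw [sub_add_cancel, zero_add] at this
      exact hr.symm this
  -- The class of the origin as an additive subgroup
  set G : AddSubgroup (Fin d → ℝ) :=
    { carrier := {y | r y 0}
      zero_mem' := hr.refl 0
      add_mem' := by
        intro a b ha hb
        have h1 := hTinv b 0 hb a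
        rw [zero_add] at h1
        have h1' : r (a + b) a := by rwa [add_comm b a] at h1
        exact hr.trans h1' ha
      neg_mem' := by
        intro a ha
        have := hTinv a 0 ha (-a)
        rw [add_neg_cancel, zero_add] at this
        exact hr.symm this } with hGdef
  have hGcl : IsClosed (G : Set (Fin d → ℝ)) := by
    have hcont : Continuous fun y : Fin d → ℝ => ((y, (0 : Fin d → ℝ)) : _ × _) := by fun_prop
    show IsClosed {y : Fin d → ℝ | r y 0}
    exact hclosed.preimage hcont
  have hGconn : IsConnected (G : Set (Fin d → ℝ)) := hconn
  have hsm := aux_smul_mem d G hGcl hGconn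
  refine ⟨{ carrier := {y | r y 0}
            zero_mem' := hr.refl 0
            add_mem' := fun ha hb => G.add_mem ha hb
            smul_mem' := fun c x hx => hsm x hx c }, hGcl, fun y => Iff.rfl, hr0, ?_⟩
  apply hV.mono
  rintro _ ⟨v, hv, k, rfl⟩
  refine ⟨v, ?_, k, rfl⟩
  have := hsat 0 v hv
  rw [zero_add] at this
  exact hr.symm this
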